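/- Let 0 < δ < ε, X ⊂ ℝ^m a compact box covered by sub-boxes Y^1,...,Y^N, f: ℝ^m → ℝ^p continuous, and f^k ≤ f componentwise on Y^k with gap f_j(x) - f_j^k(x) < ε - δ for all j, x ∈ Y^k. Then every element of X^δ_{wE_ap} = {x ∈ ⋃_k W^δ_k : ∄ y ∈ ⋃_k W^δ_k with f(y) + δ·e ≺ f(x)} is an ε-weakly efficient solution of min_X f. -/
import Mathlib

lemma descent14 {m p : ℕ} (hp : 0 < p) (Y : Set (Fin m → ℝ)) (hYc : IsCompact Y)
    (g : (Fin m → ℝ) → Fin p → ℝ) (hg : ContinuousOn g Y) (δ : ℝ) (hδ : 0 < δ)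
    (y : Fin m → ℝ) (hy : y ∈ Y) :
    ∃ w ∈ Y, (∀ j, g w j ≤ g y j) ∧ ¬∃ z ∈ Y, ∀ j, g z j + δ < g w j := by
  set j0 : Fin p := ⟨0, hp⟩
  have hcont : ContinuousOn (fun x => g x j0) Y := (continuous_apply j0).comp_continuousOn hg
  obtain ⟨x0, hx0, hmin⟩ := hYc.exists_isMinOn ⟨y, hy⟩ hcont
  set B := g x0 j0 with hB
  have hBle : ∀ z ∈ Y, B ≤ g z j0 := fun z hz => hmin hz
  have key : ∀ n : ℕ, ∀ y ∈ Y, g y j0 ≤ B + n * δ →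
      ∃ w ∈ Y, (∀ j, g w j ≤ g y j) ∧ ¬∃ z ∈ Y, ∀ j, g z j + δ < g w j := by
    intro n
    induction n with
    | zero =>
      intro y hy hb
      refine ⟨y, hy, fun j => le_rfl, ?_⟩
      rintro ⟨z, hz, hzlt⟩
      have h1 := hzlt j0
      have h2 := hBle z hz
      simp at hb
      linarith
    | succ n ih =>
      intro y hy hb
      by_cases h : ∃ z ∈ Y, ∀ j, g z j + δ < g y j
      · obtain ⟨z, hz, hzlt⟩ := h
        have hz0 : g z j0 ≤ B + n * δ := by
          have := hzlt j0
          push_cast at hb ⊢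
          linarith
        obtain ⟨w, hw, hle', hne⟩ := ih z hz hz0
        exact ⟨w, hw, fun j => le_trans (hle' j) (by linarith [hzlt j]), hne⟩
      · exact ⟨y, hy, fun j => le_rfl, h⟩
  refine key ⌈(g y j0 - B) / δ⌉₊ y hy ?_
  have h1 : (g y j0 - B) / δ ≤ (⌈(g y j0 - B) / δ⌉₊ : ℝ) := Nat.le_ceil _
  rw [div_le_iff₀ hδ] at h1
  linarith

/-- Every element of the `δ`-weakly efficient solution set of the piecewise convexification
problem is an `ε`-weakly efficient solution of the original problem, for `0 < δ < ε` and
relaxation gap less than `ε - δ`. -/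
theorem stmt14 (m p N : ℕ) (Y : Fin N → Set (Fin m → ℝ))
    (hYc : ∀ k, IsCompact (Y k)) (hYne : ∀ k, (Y k).Nonempty)
    (f : (Fin m → ℝ) → Fin p → ℝ) (hf : Continuous f)
    (fk : Fin N → (Fin m → ℝ) → Fin p → ℝ) (hfk : ∀ k, ContinuousOn (fk k) (Y k))
    (δ ε : ℝ) (hδ : 0 < δ) (hδε : δ < ε)
    (hle : ∀ k, ∀ x ∈ Y k, ∀ j, fk k x j ≤ f x j)
    (hgap : ∀ k, ∀ x ∈ Y k, ∀ j, f x j - fk k x j < ε - δ)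
    (Wδ : Fin N → Set (Fin m → ℝ))
    (hWδ : ∀ k, Wδ k = {z ∈ Y k | ¬∃ y ∈ Y k, ∀ j, fk k y j + δ < fk k z j})
    (x : Fin m → ℝ)
    (hx : x ∈ {z ∈ ⋃ k, Wδ k | ¬∃ y ∈ ⋃ k, Wδ k, ∀ j, f y j + δ < f z j}) :
    ¬∃ y ∈ ⋃ k, Y k, ∀ j, f y j + ε < f x j := by
  obtain ⟨hx1, hx2⟩ := hx
  rcases Nat.eq_zero_or_pos p with hp | hp
  · exact fun _ => hx2 ⟨x, hx1, fun j => absurd j.2 (by omega)⟩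
  rintro ⟨y, hyU, hylt⟩
  obtain ⟨k, hyk⟩ := Set.mem_iUnion.mp hyU
  obtain ⟨w, hwY, hwle, hwne⟩ := descent14 hp (Y k) (hYc k) (fk k) (hfk k) δ hδ y hyk
  have hwW : w ∈ Wδ k := by rw [hWδ k]; exact ⟨hwY, hwne⟩
  refine hx2 ⟨w, Set.mem_iUnion.mpr ⟨k, hwW⟩, fun j => ?_⟩
  have h1 := hgap k w hwY j
  have h2 := hwle j
  have h3 := hle k y hyk j
  have h4 := hylt j
  linarith
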